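/- Let x^A = x_{i_1}^{α_{i_1}} ··· x_{i_s}^{α_{i_s}} be a monomial in k[x_1,...,x_n] with all α_{i_t} > 0 and 1 ≤ i_1 < ... < i_s ≤ n, and set i_{s+1} = n+1. Then the number of monomials that Borel-specialize to x^A is at least Σ_{t=1}^{s} C(α_{i_1}+···+α_{i_t} + i_{t+1} - i_t - 1, i_{t+1} - i_t - 1) − s + 1. -/

import Mathlib

open MvPolynomial

noncomputable section

/-- The total degree of a monomial exponent vector. -/
def monDeg {n : ℕ} (A : Fin n →₀ ℕ) : ℕ := A.sum fun _ e => e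

/-- `BorelSpec A B` : the monomial `x^B` is a Borel specialization of `x^A`,
i.e. `x^B` is obtained from `x^A` by replacing every variable `x_i` of `x^A`
by a variable `x_{f i}` with `f i ≤ i`. -/
def BorelSpec {n : ℕ} (A B : Fin n →₀ ℕ) : Prop :=
  ∃ f : Fin n → Fin n, (∀ i, f i ≤ i) ∧ B = A.mapDomain f

/-- `borelPSet A` : the set of (exponent vectors of) monomials that can be
Borel-specialized to `x^A`. -/
def borelPSet {n : ℕ} (A : Fin n →₀ ℕ) : Set (Fin n →₀ ℕ) := {C | BorelSpec C A}

/-- A monomial ideal: an ideal generated by monomials. -/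
def IsMonomialIdeal {k : Type*} [Field k] {n : ℕ} (I : Ideal (MvPolynomial (Fin n) k)) : Prop :=
  ∃ S : Set (Fin n →₀ ℕ), I = Ideal.span ((fun A => (monomial A (1 : k))) '' S)

/-- Borel-fixed: `I` is fixed by every invertible linear substitution sending each
variable `x_i` to a linear combination of the variables `x_j` with `j ≤ i`
(the Borel group of upper triangular invertible matrices). -/
def IsBorelFixed {k : Type*} [Field k] {n : ℕ} (I : Ideal (MvPolynomial (Fin n) k)) : Prop :=
  ∀ g : Matrix (Fin n) (Fin n) k, IsUnit g.det → (∀ i j : Fin n, i < j → g i j = 0) →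
    I.map (aeval (fun i => ∑ j, MvPolynomial.C (g i j) * X j) :
      MvPolynomial (Fin n) k →ₐ[k] MvPolynomial (Fin n) k) = I

/-- The Hilbert function `t ↦ dim_k (R/I)_t`. -/
def hilb {k : Type*} [Field k] {n : ℕ} (I : Ideal (MvPolynomial (Fin n) k)) (t : ℕ) : ℕ :=
  Module.finrank k
    ((homogeneousSubmodule (Fin n) k t).map (Ideal.Quotient.mkₐ k I).toLinearMap)

/-- `Q` generates a reduction of `R/I` : `(Q + I)_t = R_t` for all large `t`. -/
def IsReductionOf {k : Type*} [Field k] {n : ℕ} (Q I : Ideal (MvPolynomial (Fin n) k)) : Prop :=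
  ∃ N : ℕ, ∀ t ≥ N, ∀ p : MvPolynomial (Fin n) k, p.IsHomogeneous t → p ∈ Q ⊔ I

/-- The reduction number `r_Q(R/I)` : the least `r` such that
`(Q + I)_t = R_t` for all `t > r`. -/
def redNum {k : Type*} [Field k] {n : ℕ} (Q I : Ideal (MvPolynomial (Fin n) k)) : ℕ :=
  sInf {r : ℕ | ∀ t > r, ∀ p : MvPolynomial (Fin n) k, p.IsHomogeneous t → p ∈ Q ⊔ I}

/-- `Q` is an `s`-reduction of `R/I` : it is generated by `s` linear forms and is a
reduction of `R/I`. -/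
def IsSReduction {k : Type*} [Field k] {n : ℕ} (s : ℕ)
    (Q I : Ideal (MvPolynomial (Fin n) k)) : Prop :=
  (∃ z : Fin s → MvPolynomial (Fin n) k,
      (∀ i, (z i).IsHomogeneous 1) ∧ Q = Ideal.span (Set.range z)) ∧
  IsReductionOf Q I

/-- The `s`-reduction number `r_s(R/I)` : the minimum of `r_Q(R/I)` over all
`s`-reductions `Q` of `R/I`. -/
def sRedNum {k : Type*} [Field k] {n : ℕ} (s : ℕ) (I : Ideal (MvPolynomial (Fin n) k)) : ℕ :=
  sInf {r : ℕ | ∃ Q, IsSReduction s Q I ∧ redNum Q I = r}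

/-- Strong stability condition on a monomial ideal: if `x^A ∈ I` is divisible by `x_i`,
then `x^A x_j / x_i ∈ I` for all `j ≤ i`. -/
def StronglyStable {k : Type*} [Field k] {n : ℕ} (I : Ideal (MvPolynomial (Fin n) k)) : Prop :=
  ∀ (A : Fin n →₀ ℕ) (i j : Fin n), monomial A (1 : k) ∈ I → A i ≠ 0 → j ≤ i →
    monomial (A - Finsupp.single i 1 + Finsupp.single j 1) (1 : k) ∈ I

/-- Lex-segment condition: if `x^A ∈ I` and `x^B ≥ x^A` in the lexicographic order
(with `x_1 > x_2 > ⋯ > x_n`) and `deg x^B = deg x^A`, then `x^B ∈ I`. -/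
def IsLexSegment {k : Type*} [Field k] {n : ℕ} (I : Ideal (MvPolynomial (Fin n) k)) : Prop :=
  ∀ A B : Fin n →₀ ℕ, monomial A (1 : k) ∈ I → monDeg B = monDeg A →
    Finsupp.Lex (· < ·) (· < ·) A B → monomial B (1 : k) ∈ I

/-- A homogeneous ideal: closed under taking homogeneous components. -/
def IsHomogeneousIdeal {k : Type*} [Field k] {n : ℕ} (I : Ideal (MvPolynomial (Fin n) k)) : Prop :=
  ∀ p ∈ I, ∀ t : ℕ, homogeneousComponent t p ∈ I

/-- The ideal generated by the last `s` variables `x_{n-s+1}, …, x_n`. -/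
def lastVars (k : Type*) [Field k] (n s : ℕ) : Ideal (MvPolynomial (Fin n) k) :=
  Ideal.span ((fun i => (X i : MvPolynomial (Fin n) k)) '' {i : Fin n | n - s ≤ (i : ℕ)})


/-- `i_{t+1} - i_t - 1` in 0-based indexing, with the convention `i_{s+1} = n+1`. -/
def gapLen {n : ℕ} (s : ℕ) (e : Fin s → Fin n) (t : Fin s) : ℕ :=
  (if h : (t : ℕ) + 1 < s then ((e ⟨(t : ℕ) + 1, h⟩ : Fin n) : ℕ) else n) - (e t : ℕ) - 1

/-- The partial sum `α_{i_1} + ⋯ + α_{i_t}`. -/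
def partSum {s : ℕ} (α : Fin s → ℕ) (t : Fin s) : ℕ :=
  ∑ u ∈ Finset.univ.filter (fun u => u ≤ t), α u

namespace StmtAux

lemma binom_diag_mono (P : ℕ) : ∀ {a b : ℕ}, a ≤ b → (P + a).choose a ≤ (P + b).choose b := by
  intro a b h
  induction b with
  | zero => simp_all
  | succ b ih =>
    rcases Nat.lt_or_ge a (b+1) with h' | h'
    · calc (P + a).choose a ≤ (P + b).choose b := ih (Nat.lt_succ_iff.mp h')
      _ ≤ (P + (b+1)).choose (b+1) := by
          rw [show P + (b+1) = (P + b) + 1 by ring, Nat.choose_succ_succ]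
          exact Nat.le_add_right _ _
    · have : a = b + 1 := le_antisymm h h'
      subst this; exact le_rfl

lemma hockey (a : ℕ) : ∀ G : ℕ,
    ∑ k ∈ Finset.range (G+1), (a + k).choose k = (a + 1 + G).choose G := by
  intro G
  induction G with
  | zero => simp
  | succ G ih =>
    rw [Finset.sum_range_succ, ih, show a + 1 + (G+1) = (a + 1 + G) + 1 by ring,
      Nat.choose_succ_succ' (a+1+G) G]
    congr 2
    omega

lemma conv (P : ℕ) : ∀ (a G : ℕ),
    ∑ k ∈ Finset.range (G+1), (P + k).choose k * (a + (G - k)).choose (G - k)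
      = (P + a + 1 + G).choose G := by
  intro a
  induction a with
  | zero =>
    intro G
    have h1 : ∀ k ∈ Finset.range (G+1),
        (P + k).choose k * (0 + (G - k)).choose (G - k) = (P + k).choose k := by
      intro k _; rw [Nat.zero_add, Nat.choose_self, mul_one]
    rw [Finset.sum_congr rfl h1, hockey P G]
  | succ a iha =>
    intro G
    induction G with
    | zero => simp
    | succ G ihG =>
      have key : ∀ k ∈ Finset.range (G+2),
          (P + k).choose k * (a + 1 + (G + 1 - k)).choose (G + 1 - k)
          = (P + k).choose k * (a + (G + 1 - k)).choose (G + 1 - k)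
            + (if k ≤ G then (P + k).choose k * (a + 1 + (G - k)).choose (G - k) else 0) := by
        intro k hk
        rcases le_or_gt k G with h | h
        · rw [if_pos h]
          have hd : G + 1 - k = (G - k) + 1 := by omega
          rw [hd, show a + 1 + (G - k + 1) = (a + (G - k + 1)) + 1 by ring,
            Nat.choose_succ_succ (a + (G - k + 1)) (G - k), Nat.mul_add,
            show a + 1 + (G - k) = a + (G - k + 1) by omega]
          ring
        · rw [if_neg (by omega)]
          have : G + 1 - k = 0 := by omega
          rw [this]; simp
      rw [Finset.sum_congr rfl key, Finset.sum_add_distrib, iha (G+1)]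
      have h2 : ∑ k ∈ Finset.range (G+2),
          (if k ≤ G then (P + k).choose k * (a + 1 + (G - k)).choose (G - k) else 0)
          = ∑ k ∈ Finset.range (G+1), (P + k).choose k * (a + 1 + (G - k)).choose (G - k) := by
        rw [Finset.sum_range_succ, if_neg (by omega)]
        rw [add_zero]
        apply Finset.sum_congr rfl
        intro k hk
        rw [if_pos (by simp at hk; omega)]
      rw [h2, ihG]
      rw [show P + (a+1) + 1 + (G+1) = (P + a + 1 + (G+1)) + 1 by ring,
        Nat.choose_succ_succ' _ G, show P + (a+1) + 1 + G = P + a + 1 + (G+1) by ring,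
        Nat.add_comm]


/-- Finset of multisets of cardinality `c` with all elements in `s`. -/
def msets (s : Finset ℕ) (c : ℕ) : Finset (Multiset ℕ) :=
  (s.sym c).image (fun N : Sym ℕ c => (N : Multiset ℕ))

lemma mem_msets {s : Finset ℕ} {c : ℕ} {M : Multiset ℕ} :
    M ∈ msets s c ↔ Multiset.card M = c ∧ ∀ x ∈ M, x ∈ s := by
  classical
  constructor
  · rintro h
    simp only [msets, Finset.mem_image] at h
    obtain ⟨N, hN, rfl⟩ := h
    exact ⟨N.2, fun x hx => (Finset.mem_sym_iff.mp hN) x hx⟩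
  · rintro ⟨hc, hs⟩
    simp only [msets, Finset.mem_image]
    exact ⟨⟨M, hc⟩, Finset.mem_sym_iff.mpr (fun a ha => hs a ha), rfl⟩

lemma card_msets (s : Finset ℕ) (c : ℕ) :
    (msets s c).card = (s.card + c - 1).choose c := by
  classical
  have hinj : Set.InjOn (fun N : Sym ℕ c => (N : Multiset ℕ)) (s.sym c) := by
    intro a _ b _ h
    exact Subtype.ext h
  rw [msets, Finset.card_image_of_injOn hinj]
  -- now biject s.sym c with Sym {x // x ∈ s} c
  let φ : Sym {x // x ∈ s} c → Sym ℕ c := Sym.map (fun x => (x : ℕ))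
  have hφinj : Function.Injective φ := Sym.map_injective Subtype.coe_injective c
  have himg : Finset.univ.image φ = s.sym c := by
    ext m
    simp only [Finset.mem_image, Finset.mem_univ, true_and, Finset.mem_sym_iff]
    constructor
    · rintro ⟨N, rfl⟩ a ha
      simp only [φ, Sym.mem_map] at ha
      obtain ⟨b, _, rfl⟩ := ha
      exact b.2
    · intro hmem
      refine ⟨⟨(m : Multiset ℕ).attach.map (fun x => ⟨x.1, hmem x.1 x.2⟩), by simp⟩, ?_⟩
      apply Subtype.ext
      show Multiset.map (fun x : {x // x ∈ s} => (x : ℕ))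
        ((m : Multiset ℕ).attach.map (fun x => ⟨x.1, hmem x.1 x.2⟩)) = (m : Multiset ℕ)
      rw [Multiset.map_map]
      exact (m : Multiset ℕ).attach_map_val
  calc (s.sym c).card = (Finset.univ.image φ).card := by rw [himg]
    _ = (Finset.univ : Finset (Sym {x // x ∈ s} c)).card :=
        Finset.card_image_of_injective _ hφinj
    _ = Fintype.card (Sym {x // x ∈ s} c) := Finset.card_univ
    _ = (Fintype.card {x // x ∈ s} + c - 1).choose c := Sym.card_sym_eq_choose c
    _ = (s.card + c - 1).choose c := by rw [Fintype.card_coe]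

def sumal : List (ℕ × ℕ) → ℕ
  | [] => 0
  | p :: rest => p.2 + sumal rest

def famF : ℕ → List (ℕ × ℕ) → Finset (Multiset ℕ)
  | _, [] => {0}
  | m, (e, a) :: rest =>
    (Finset.Ico e m).biUnion fun v =>
      ((msets (Finset.Ico v m) (a - 1)) ×ˢ famF v rest).image fun p => (v ::ₘ p.1) + p.2

def ChainOK : ℕ → List (ℕ × ℕ) → Prop
  | _, [] => True
  | m, (e, a) :: rest => e < m ∧ 0 < a ∧ ChainOK e rest

def BoundList : ℕ → List (ℕ × ℕ) → ℕ
  | _, [] => 1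
  | m, (e, a) :: rest =>
      (a + sumal rest + (m - e - 1)).choose (m - e - 1) + (BoundList e rest - 1)

lemma mem_famF_cons {m e a : ℕ} {rest : List (ℕ × ℕ)} {M : Multiset ℕ} :
    M ∈ famF m ((e, a) :: rest) ↔
      ∃ v, e ≤ v ∧ v < m ∧ ∃ N M', N ∈ msets (Finset.Ico v m) (a - 1) ∧
        M' ∈ famF v rest ∧ M = (v ::ₘ N) + M' := by
  classical
  simp only [famF, Finset.mem_biUnion, Finset.mem_image, Finset.mem_Ico, Finset.mem_product]
  constructor
  · rintro ⟨v, ⟨h1, h2⟩, ⟨p, ⟨hp1, hp2⟩, rfl⟩⟩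
    exact ⟨v, h1, h2, p.1, p.2, hp1, hp2, rfl⟩
  · rintro ⟨v, h1, h2, N, M', hN, hM', rfl⟩
    exact ⟨v, ⟨h1, h2⟩, ⟨(N, M'), ⟨hN, hM'⟩, rfl⟩⟩

lemma mem_famF_lt : ∀ (bl : List (ℕ × ℕ)) (m : ℕ) (M : Multiset ℕ),
    M ∈ famF m bl → ∀ x ∈ M, x < m := by
  intro bl
  induction bl with
  | nil =>
    intro m M hM x hx
    simp only [famF, Finset.mem_singleton] at hM
    subst hM; simp at hx
  | cons p rest ih =>
    obtain ⟨e, a⟩ := p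
    intro m M hM x hx
    rw [mem_famF_cons] at hM
    obtain ⟨v, h1, h2, N, M', hN, hM', rfl⟩ := hM
    rcases Multiset.mem_add.mp hx with hx | hx
    · rcases Multiset.mem_cons.mp hx with rfl | hx
      · exact h2
      · exact (Finset.mem_Ico.mp ((mem_msets.mp hN).2 x hx)).2
    · exact lt_trans (ih v M' hM' x hx) h2

lemma ChainOK_mono : ∀ (bl : List (ℕ × ℕ)) {v w : ℕ}, v ≤ w → ChainOK v bl → ChainOK w bl := by
  intro bl v w h hc
  cases bl with
  | nil => trivial
  | cons p rest => exact ⟨lt_of_lt_of_le hc.1 h, hc.2.1, hc.2.2⟩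

lemma card_famF_elem : ∀ (bl : List (ℕ × ℕ)) (m : ℕ) (M : Multiset ℕ),
    ChainOK m bl → M ∈ famF m bl → Multiset.card M = sumal bl := by
  intro bl
  induction bl with
  | nil =>
    intro m M _ hM
    simp only [famF, Finset.mem_singleton] at hM
    subst hM; simp [sumal]
  | cons p rest ih =>
    obtain ⟨e, a⟩ := p
    rintro m M ⟨_, ha, hc⟩ hM
    rw [mem_famF_cons] at hM
    obtain ⟨v, h1, h2, N, M', hN, hM', rfl⟩ := hM
    have hcc : ChainOK v rest := ChainOK_mono rest h1 hc
    have := ih v M' hcc hM'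
    simp only [Multiset.card_add, Multiset.card_cons, (mem_msets.mp hN).1, this, sumal]
    omega



lemma BoundList_pos : ∀ (bl : List (ℕ × ℕ)) (m : ℕ), 1 ≤ BoundList m bl := by
  intro bl m
  cases bl with
  | nil => simp [BoundList]
  | cons p rest =>
    obtain ⟨e, a⟩ := p
    have : 0 < (a + sumal rest + (m - e - 1)).choose (m - e - 1) :=
      Nat.choose_pos (by omega)
    simp only [BoundList]
    omega

lemma aux_mul {a b : ℕ} (ha : 1 ≤ a) (hb : 1 ≤ b) : a + (b - 1) ≤ a * b := by
  obtain ⟨c, rfl⟩ : ∃ c, b = c + 1 := ⟨b - 1, by omega⟩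
  have : c ≤ a * c := Nat.le_mul_of_pos_left c ha
  rw [Nat.mul_add, Nat.mul_one]
  omega

lemma filter_lt_decomp {m v a : ℕ} {rest : List (ℕ × ℕ)}
    {N M' : Multiset ℕ} (hN : N ∈ msets (Finset.Ico v m) (a-1)) (hM' : M' ∈ famF v rest) :
    ((v ::ₘ N) + M').filter (fun x => x < v) = M' := by
  have hM'lt : ∀ x ∈ M', x < v := mem_famF_lt rest v M' hM'
  have hNge : ∀ x ∈ N, v ≤ x := fun x hx =>
    (Finset.mem_Ico.mp ((mem_msets.mp hN).2 x hx)).1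
  rw [Multiset.filter_add]
  have h1 : (v ::ₘ N).filter (fun x => x < v) = 0 := by
    rw [Multiset.filter_eq_nil]
    intro x hx
    rcases Multiset.mem_cons.mp hx with rfl | hx
    · omega
    · have := hNge x hx; omega
  have h2 : M'.filter (fun x => x < v) = M' := Multiset.filter_eq_self.mpr hM'lt
  rw [h1, h2, zero_add]

lemma filter_lt_card_gt {m v a : ℕ} {rest : List (ℕ × ℕ)} (hc : ChainOK v rest)
    {N M' : Multiset ℕ} (hN : N ∈ msets (Finset.Ico v m) (a-1)) (hM' : M' ∈ famF v rest)
    {w : ℕ} (hvw : v < w) :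
    sumal rest < Multiset.card (((v ::ₘ N) + M').filter (fun x => x < w)) := by
  have hM'lt : ∀ x ∈ M', x < v := mem_famF_lt rest v M' hM'
  have hcard : Multiset.card M' = sumal rest := card_famF_elem rest v M' hc hM'
  rw [Multiset.filter_add, Multiset.filter_cons_of_pos (p := fun x => x < w) N hvw]
  have h2 : M'.filter (fun x => x < w) = M' :=
    Multiset.filter_eq_self.mpr (fun x hx => lt_trans (hM'lt x hx) hvw)
  rw [h2]
  simp only [Multiset.card_add, Multiset.card_cons]
  omega

lemma card_famF_ge : ∀ (bl : List (ℕ × ℕ)) (m : ℕ),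
    ChainOK m bl → BoundList m bl ≤ (famF m bl).card := by
  intro bl
  induction bl with
  | nil => intro m _; simp [famF, BoundList]
  | cons p rest ih =>
    obtain ⟨e, a⟩ := p
    rintro m ⟨hem, ha, hc⟩
    classical
    set G := m - e - 1 with hG
    set P' := sumal rest with hP'
    -- the image finset for a given v
    set Im : ℕ → Finset (Multiset ℕ) := fun v =>
      ((msets (Finset.Ico v m) (a - 1)) ×ˢ famF v rest).image
        (fun p => (v ::ₘ p.1) + p.2) with hIm
    have hmemIm : ∀ v M, M ∈ Im v →
        ∃ N M', N ∈ msets (Finset.Ico v m) (a-1) ∧ M' ∈ famF v rest ∧ M = (v ::ₘ N) + M' := by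
      intro v M hM
      simp only [hIm, Finset.mem_image, Finset.mem_product] at hM
      obtain ⟨q, ⟨hq1, hq2⟩, rfl⟩ := hM
      exact ⟨q.1, q.2, hq1, hq2, rfl⟩
    -- pairwise disjointness
    have hcontra : ∀ v₁ v₂ : ℕ, e ≤ v₁ → e ≤ v₂ → v₁ < v₂ →
        ∀ M, M ∈ Im v₁ → M ∈ Im v₂ → False := by
      intro v₁ v₂ hv₁ hv₂ hlt M h1 h2
      obtain ⟨N₁, M₁, hN₁, hM₁, hEq₁⟩ := hmemIm v₁ M h1
      obtain ⟨N₂, M₂, hN₂, hM₂, hEq₂⟩ := hmemIm v₂ M h2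
      have c1 := filter_lt_card_gt (ChainOK_mono rest hv₁ hc) hN₁ hM₁ hlt
      rw [← hEq₁] at c1
      have c2 : (M.filter (fun x => x < v₂)).card = sumal rest := by
        rw [hEq₂, filter_lt_decomp hN₂ hM₂]
        exact card_famF_elem rest v₂ M₂ (ChainOK_mono rest hv₂ hc) hM₂
      omega
    have hdisj : ∀ v₁ ∈ Finset.Ico e m, ∀ v₂ ∈ Finset.Ico e m, v₁ ≠ v₂ →
        Disjoint (Im v₁) (Im v₂) := by
      intro v₁ h₁ v₂ h₂ hne
      rw [Finset.disjoint_left]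
      intro M hMv₁ hMv₂
      rcases lt_or_gt_of_ne hne with h | h
      · exact hcontra v₁ v₂ (Finset.mem_Ico.mp h₁).1 (Finset.mem_Ico.mp h₂).1 h M hMv₁ hMv₂
      · exact hcontra v₂ v₁ (Finset.mem_Ico.mp h₂).1 (Finset.mem_Ico.mp h₁).1 h M hMv₂ hMv₁
    have step1 : (famF m ((e,a)::rest)).card = ∑ v ∈ Finset.Ico e m, (Im v).card := by
      show ((Finset.Ico e m).biUnion Im).card = _
      exact Finset.card_biUnion hdisj
    -- card of each image
    have step2 : ∀ v, e ≤ v → v < m →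
        (Im v).card = (msets (Finset.Ico v m) (a-1)).card * (famF v rest).card := by
      intro v hev hvm
      rw [hIm]
      rw [Finset.card_image_of_injOn, Finset.card_product]
      intro q₁ hq₁ q₂ hq₂ hEq
      simp only [Finset.mem_coe, Finset.mem_product] at hq₁ hq₂
      have hEq' : (v ::ₘ q₁.1) + q₁.2 = (v ::ₘ q₂.1) + q₂.2 := hEq
      have e2 : q₁.2 = q₂.2 := by
        have := congrArg (fun M => M.filter (fun x => x < v)) hEq'
        simpa only [filter_lt_decomp hq₁.1 hq₁.2, filter_lt_decomp hq₂.1 hq₂.2] using this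
      have e1 : q₁.1 = q₂.1 := by
        rw [e2] at hEq'
        have := add_right_cancel hEq'
        exact (Multiset.cons_inj_right v).mp this
      exact Prod.ext e1 e2
    -- per-term lower bound for famF v rest
    have hT : ∀ k, (P' + k).choose k ≤ (famF (e+k) rest).card := by
      intro k
      cases rest with
      | nil =>
        simp [famF, hP', sumal, Nat.choose_symm_add]
      | cons q rest' =>
        have hcok : ChainOK (e+k) (q :: rest') := ChainOK_mono _ (Nat.le_add_right e k) hc
        refine le_trans ?_ (ih (e+k) hcok)
        obtain ⟨e', a'⟩ := q
        have he'e : e' < e := hc.1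
        have hkg : k ≤ (e + k) - e' - 1 := by omega
        calc (P' + k).choose k ≤ (P' + ((e+k) - e' - 1)).choose ((e+k) - e' - 1) :=
              binom_diag_mono P' hkg
          _ ≤ BoundList (e+k) ((e',a') :: rest') := by
              simp only [BoundList, hP', sumal]
              exact Nat.le_add_right _ _
    have hw : ∀ k, k ≤ G → (msets (Finset.Ico (e+k) m) (a-1)).card
        = ((G - k) + (a-1)).choose (a-1) := by
      intro k hk
      rw [card_msets, Nat.card_Ico]
      congr 1
      omega
    have step3 : (famF m ((e,a)::rest)).card
        = ∑ k ∈ Finset.range (G+1),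
            (msets (Finset.Ico (e+k) m) (a-1)).card * (famF (e+k) rest).card := by
      rw [step1, Finset.sum_Ico_eq_sum_range, show m - e = G + 1 by omega]
      apply Finset.sum_congr rfl
      intro k hk
      exact step2 (e+k) (by omega) (by simp only [Finset.mem_range] at hk; omega)
    have hbig : (∑ k ∈ Finset.range (G+1), ((G-k)+(a-1)).choose (a-1) * (P' + k).choose k)
          + ((famF e rest).card - 1)
        ≤ ∑ k ∈ Finset.range (G+1),
            (msets (Finset.Ico (e+k) m) (a-1)).card * (famF (e+k) rest).card := by
      rw [Finset.sum_range_succ' (fun k => ((G-k)+(a-1)).choose (a-1) * (P' + k).choose k) G,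
        Finset.sum_range_succ'
          (fun k => (msets (Finset.Ico (e+k) m) (a-1)).card * (famF (e+k) rest).card) G]
      have hA : ∀ k ∈ Finset.range G,
          ((G-(k+1))+(a-1)).choose (a-1) * (P' + (k+1)).choose (k+1)
          ≤ (msets (Finset.Ico (e+(k+1)) m) (a-1)).card * (famF (e+(k+1)) rest).card := by
        intro k hk
        simp only [Finset.mem_range] at hk
        rw [hw (k+1) (by omega)]
        exact Nat.mul_le_mul_left _ (hT (k+1))
      have hB : ((G-0)+(a-1)).choose (a-1) * (P' + 0).choose 0 + ((famF e rest).card - 1)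
          ≤ (msets (Finset.Ico (e+0) m) (a-1)).card * (famF (e+0) rest).card := by
        rw [hw 0 (by omega), Nat.add_zero, Nat.choose_zero_right, Nat.mul_one,
          show e + 0 = e from rfl]
        have h1 : 0 < ((G-0)+(a-1)).choose (a-1) := Nat.choose_pos (by omega)
        have h2 : 1 ≤ (famF e rest).card := le_trans (BoundList_pos rest e) (ih e hc)
        exact aux_mul h1 h2
      have hsplit : ∀ (S1 S2 f0 g0 c : ℕ), S1 ≤ S2 → f0 + c ≤ g0 → S1 + f0 + c ≤ S2 + g0 := by
        intros; omega
      exact hsplit _ _ _ _ _ (Finset.sum_le_sum hA) hB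
    have hconv : (∑ k ∈ Finset.range (G+1), ((G-k)+(a-1)).choose (a-1) * (P'+k).choose k)
        = (a + P' + G).choose G := by
      rw [show a + P' + G = P' + (a-1) + 1 + G by omega, ← conv P' (a-1) G]
      apply Finset.sum_congr rfl
      intro k hk
      rw [mul_comm]
      congr 1
      rw [Nat.add_comm (G-k) (a-1)]
      exact Nat.choose_symm_add
    have hfinal : BoundList m ((e,a)::rest)
        ≤ (a + P' + G).choose G + ((famF e rest).card - 1) := by
      have h2 := ih e hc
      simp only [BoundList, ← hP', ← hG]
      exact Nat.add_le_add_left (Nat.sub_le_sub_right h2 1) _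
    calc BoundList m ((e,a)::rest)
        ≤ (a + P' + G).choose G + ((famF e rest).card - 1) := hfinal
      _ = (∑ k ∈ Finset.range (G+1), ((G-k)+(a-1)).choose (a-1) * (P'+k).choose k)
          + ((famF e rest).card - 1) := by rw [hconv]
      _ ≤ ∑ k ∈ Finset.range (G+1),
            (msets (Finset.Ico (e+k) m) (a-1)).card * (famF (e+k) rest).card := hbig
      _ = (famF m ((e,a)::rest)).card := step3.symm


def blocksMS : List (ℕ × ℕ) → Multiset ℕ
  | [] => 0
  | (e, a) :: rest => Multiset.replicate a e + blocksMS rest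

lemma famF_spec : ∀ (bl : List (ℕ × ℕ)) (m : ℕ), ChainOK m bl → ∀ M ∈ famF m bl,
    ∃ F : ℕ → ℕ, (∀ x ∈ M, F x ≤ x) ∧ M.map F = blocksMS bl := by
  intro bl
  induction bl with
  | nil =>
    intro m _ M hM
    simp only [famF, Finset.mem_singleton] at hM
    subst hM
    exact ⟨id, by simp, by simp [blocksMS]⟩
  | cons p rest ih =>
    obtain ⟨e, a⟩ := p
    rintro m ⟨hem, ha, hc⟩ M hM
    rw [mem_famF_cons] at hM
    obtain ⟨v, h1, h2, N, M', hN, hM', rfl⟩ := hM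
    obtain ⟨F', hF'le, hF'map⟩ := ih v (ChainOK_mono rest h1 hc) M' hM'
    have hM'lt : ∀ x ∈ M', x < v := mem_famF_lt rest v M' hM'
    have hNge : ∀ x ∈ N, v ≤ x := fun x hx =>
      (Finset.mem_Ico.mp ((mem_msets.mp hN).2 x hx)).1
    refine ⟨fun x => if v ≤ x then e else F' x, ?_, ?_⟩
    · intro x hx
      rcases Multiset.mem_add.mp hx with hx | hx
      · have hvx : v ≤ x := by
          rcases Multiset.mem_cons.mp hx with rfl | hx
          · exact le_rfl
          · exact hNge x hx
        show (if v ≤ x then e else F' x) ≤ x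
        rw [if_pos hvx]
        exact le_trans h1 hvx
      · have hxv : x < v := hM'lt x hx
        show (if v ≤ x then e else F' x) ≤ x
        rw [if_neg (by omega)]
        exact hF'le x hx
    · rw [Multiset.map_add]
      have htop : (v ::ₘ N).map (fun x => if v ≤ x then e else F' x)
          = Multiset.replicate a e := by
        have hcg : ∀ x ∈ (v ::ₘ N), (if v ≤ x then e else F' x) = (fun _ => e) x := by
          intro x hx
          rcases Multiset.mem_cons.mp hx with rfl | hx
          · rw [if_pos le_rfl]
          · rw [if_pos (hNge x hx)]
        rw [Multiset.map_congr rfl hcg, Multiset.map_const']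
        congr 1
        rw [Multiset.card_cons, (mem_msets.mp hN).1]
        omega
      have hbot : M'.map (fun x => if v ≤ x then e else F' x) = M'.map F' :=
        Multiset.map_congr rfl (fun x hx => if_neg (by have := hM'lt x hx; omega))
      rw [htop, hbot, hF'map]
      rfl

section Cnt

variable {n : ℕ}

noncomputable def cnt (n : ℕ) (M : Multiset ℕ) : Fin n →₀ ℕ :=
  Finsupp.equivFunOnFinite.symm (fun i => M.count (i : ℕ))

lemma cnt_apply (M : Multiset ℕ) (i : Fin n) : cnt n M i = M.count (i : ℕ) := rfl

lemma cnt_zero : cnt n 0 = 0 := by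
  ext i; simp [cnt_apply]

lemma cnt_add (M N : Multiset ℕ) : cnt n (M + N) = cnt n M + cnt n N := by
  ext i; simp [cnt_apply]

lemma cnt_replicate (c x : ℕ) (h : x < n) :
    cnt n (Multiset.replicate c x) = Finsupp.single ⟨x, h⟩ c := by
  ext i
  rw [cnt_apply, Multiset.count_replicate, Finsupp.single_apply]
  by_cases hi : (i : ℕ) = x
  · rw [if_pos hi.symm, if_pos (by exact Fin.ext hi.symm)]
  · rw [if_neg (fun hh => hi hh.symm), if_neg (by intro hh; exact hi (by rw [← hh]))]

lemma cnt_cons (a : ℕ) (M : Multiset ℕ) (h : a < n) :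
    cnt n (a ::ₘ M) = Finsupp.single ⟨a, h⟩ 1 + cnt n M := by
  have : (a ::ₘ M) = Multiset.replicate 1 a + M := by
    simp [Multiset.replicate_one, Multiset.singleton_add]
  rw [this, cnt_add, cnt_replicate 1 a h]

lemma cnt_mapDomain (f : Fin n → Fin n) (F : ℕ → ℕ) :
    ∀ (M : Multiset ℕ), (∀ x ∈ M, x < n) → (∀ x ∈ M, F x < n) →
    (∀ x ∈ M, ∀ (h : x < n), ((f ⟨x, h⟩ : Fin n) : ℕ) = F x) →
    Finsupp.mapDomain f (cnt n M) = cnt n (M.map F) := by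
  intro M
  induction M using Multiset.induction_on with
  | empty => intro _ _ _; simp [cnt_zero]
  | cons a M ihM =>
    intro hlt hFlt hcomp
    have ha : a < n := hlt a (Multiset.mem_cons_self a M)
    have hFa : F a < n := hFlt a (Multiset.mem_cons_self a M)
    rw [cnt_cons a M ha, Finsupp.mapDomain_add, Finsupp.mapDomain_single,
      Multiset.map_cons, cnt_cons (F a) (M.map F) hFa]
    have h1 : f ⟨a, ha⟩ = ⟨F a, hFa⟩ :=
      Fin.ext (hcomp a (Multiset.mem_cons_self a M) ha)
    rw [h1, ihM (fun x hx => hlt x (Multiset.mem_cons_of_mem hx))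
      (fun x hx => hFlt x (Multiset.mem_cons_of_mem hx))
      (fun x hx h => hcomp x (Multiset.mem_cons_of_mem hx) h)]

lemma cnt_injOn (M N : Multiset ℕ) (hM : ∀ x ∈ M, x < n) (hN : ∀ x ∈ N, x < n)
    (h : cnt n M = cnt n N) : M = N := by
  ext b
  by_cases hb : b < n
  · have := congrArg (fun C => C ⟨b, hb⟩) h
    simpa [cnt_apply] using this
  · rw [Multiset.count_eq_zero_of_notMem (fun hmem => hb (hM b hmem)),
      Multiset.count_eq_zero_of_notMem (fun hmem => hb (hN b hmem))]

end Cnt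

lemma cnt_finsetSum {n : ℕ} {ι : Type*} (g : ι → Multiset ℕ) (S : Finset ι) :
    cnt n (∑ i ∈ S, g i) = ∑ i ∈ S, cnt n (g i) := by
  classical
  induction S using Finset.induction_on with
  | empty => simp [cnt_zero]
  | insert a S' hx ih =>
                    rw [Finset.sum_insert hx, Finset.sum_insert hx, cnt_add, ih]

def buildL (s : ℕ) (e : Fin s → ℕ) (α : Fin s → ℕ) : List (ℕ × ℕ) :=
  (List.ofFn (fun t => (e t, α t))).reverse

lemma buildL_succ (s : ℕ) (e α : Fin (s+1) → ℕ) :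
    buildL (s+1) e α = (e (Fin.last s), α (Fin.last s)) ::
      buildL s (fun t => e t.castSucc) (fun t => α t.castSucc) := by
  unfold buildL
  rw [List.ofFn_succ', List.concat_eq_append, List.reverse_append]
  rfl

lemma buildL_zero (e α : Fin 0 → ℕ) : buildL 0 e α = [] := rfl

lemma sumal_buildL : ∀ (s : ℕ) (e α : Fin s → ℕ), sumal (buildL s e α) = ∑ t, α t := by
  intro s
  induction s with
  | zero => intro e α; simp [buildL_zero, sumal]
  | succ s ih =>
    intro e α
    rw [buildL_succ, Fin.sum_univ_castSucc]
    show α (Fin.last s) + sumal _ = _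
    rw [ih]
    omega

lemma blocksMS_buildL : ∀ (s : ℕ) (e α : Fin s → ℕ),
    blocksMS (buildL s e α) = ∑ t, Multiset.replicate (α t) (e t) := by
  intro s
  induction s with
  | zero => intro e α; simp [buildL_zero, blocksMS]
  | succ s ih =>
    intro e α
    rw [buildL_succ, Fin.sum_univ_castSucc]
    show Multiset.replicate (α (Fin.last s)) (e (Fin.last s)) + blocksMS _ = _
    rw [ih]
    exact add_comm _ _

lemma chainOK_buildL : ∀ (s : ℕ) (e α : Fin s → ℕ) (m : ℕ), StrictMono e →
    (∀ t, e t < m) → (∀ t, 0 < α t) → ChainOK m (buildL s e α) := by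
  intro s
  induction s with
  | zero => intro e α m _ _ _; rw [buildL_zero]; trivial
  | succ s ih =>
    intro e α m he hm hα
    rw [buildL_succ]
    refine ⟨hm _, hα _, ?_⟩
    exact ih _ _ _ (fun a b h => he (Fin.castSucc_lt_castSucc_iff.mpr h))
      (fun t => he (Fin.castSucc_lt_last t)) (fun t => hα _)

/-- version of `gapLen` with an arbitrary window `m` and ℕ-valued positions. -/
def gp (s : ℕ) (e : Fin s → ℕ) (m : ℕ) (t : Fin s) : ℕ :=
  (if h : (t : ℕ) + 1 < s then e ⟨(t : ℕ) + 1, h⟩ else m) - e t - 1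

lemma partSum_castSucc (s : ℕ) (α : Fin (s+1) → ℕ) (t : Fin s) :
    partSum α t.castSucc = partSum (fun u => α u.castSucc) t := by
  unfold partSum
  rw [Finset.sum_filter, Finset.sum_filter,
    Fin.sum_univ_castSucc (f := fun u => if u ≤ t.castSucc then α u else 0)]
  have hlast0 : (if (Fin.last s) ≤ t.castSucc then α (Fin.last s) else 0) = 0 :=
    if_neg (not_le.mpr (Fin.castSucc_lt_last t))
  rw [hlast0, add_zero]
  apply Finset.sum_congr rfl
  intro u _
  simp [Fin.castSucc_le_castSucc_iff]

lemma gp_castSucc (s : ℕ) (e : Fin (s+1) → ℕ) (m : ℕ) (t : Fin s) :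
    gp (s+1) e m t.castSucc = gp s (fun u => e u.castSucc) (e (Fin.last s)) t := by
  unfold gp
  have hcond : ((t.castSucc : ℕ) + 1 < s + 1) := by
    have := t.2
    simp only [Fin.coe_castSucc]
    omega
  rw [dif_pos hcond]
  by_cases h : (t : ℕ) + 1 < s
  · rw [dif_pos h]
    have harg : (⟨(t.castSucc : ℕ) + 1, hcond⟩ : Fin (s+1)) = Fin.castSucc ⟨(t:ℕ)+1, h⟩ :=
      Fin.ext (by simp [Fin.coe_castSucc])
    rw [harg]
  · rw [dif_neg h]
    have harg : (⟨(t.castSucc : ℕ) + 1, hcond⟩ : Fin (s+1)) = Fin.last s :=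
      Fin.ext (by simp only [Fin.coe_castSucc, Fin.val_last]; have := t.2; omega)
    rw [harg]

lemma sum_terms_le : ∀ (s : ℕ) (e α : Fin s → ℕ) (m : ℕ), StrictMono e →
    (∀ t, e t < m) → (∀ t, 0 < α t) →
    (∑ t : Fin s, (partSum α t + gp s e m t).choose (gp s e m t)) + 1
      ≤ BoundList m (buildL s e α) + s := by
  intro s
  induction s with
  | zero =>
    intro e α m _ _ _
    rw [buildL_zero]
    simp [BoundList]
  | succ s ih =>
    intro e α m he hm hα
    have hstrictf : StrictMono (fun u : Fin s => e u.castSucc) :=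
      fun a b h => he (Fin.castSucc_lt_castSucc_iff.mpr h)
    have hIH := ih (fun u => e u.castSucc) (fun u => α u.castSucc) (e (Fin.last s))
      hstrictf (fun t => he (Fin.castSucc_lt_last t)) (fun t => hα _)
    have hBLpos := BoundList_pos (buildL s (fun u => e u.castSucc) (fun u => α u.castSucc))
      (e (Fin.last s))
    rw [buildL_succ]
    rw [Fin.sum_univ_castSucc
      (f := fun t => (partSum α t + gp (s+1) e m t).choose (gp (s+1) e m t))]
    have hfront : ∀ t : Fin s,
        (partSum α t.castSucc + gp (s+1) e m t.castSucc).choose (gp (s+1) e m t.castSucc)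
        = (partSum (fun u => α u.castSucc) t
            + gp s (fun u => e u.castSucc) (e (Fin.last s)) t).choose
              (gp s (fun u => e u.castSucc) (e (Fin.last s)) t) := by
      intro t
      rw [partSum_castSucc, gp_castSucc]
    rw [Finset.sum_congr rfl (fun t _ => hfront t)]
    have hlast_gp : gp (s+1) e m (Fin.last s) = m - e (Fin.last s) - 1 := by
      unfold gp
      rw [dif_neg (by simp [Fin.val_last])]
    have hlast_ps : partSum α (Fin.last s)
        = α (Fin.last s) + ∑ t : Fin s, α t.castSucc := by
      unfold partSum
      rw [Finset.filter_true_of_mem (fun u _ => Fin.le_last u), Fin.sum_univ_castSucc]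
      omega
    rw [hlast_gp, hlast_ps]
    show _ + 1 ≤ (α (Fin.last s) + sumal _ + (m - e (Fin.last s) - 1)).choose
        (m - e (Fin.last s) - 1) + (BoundList (e (Fin.last s)) _ - 1) + (s+1)
    rw [sumal_buildL]
    omega

lemma blocksMS_lt {bl : List (ℕ × ℕ)} {m : ℕ} (h : ChainOK m bl) :
    ∀ y ∈ blocksMS bl, y < m := by
  induction bl generalizing m with
  | nil => intro y hy; simp [blocksMS] at hy
  | cons p rest ih =>
    obtain ⟨e, a⟩ := p
    intro y hy
    rcases Multiset.mem_add.mp hy with hy | hy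
    · rw [Multiset.eq_of_mem_replicate hy]
      exact h.1
    · exact lt_trans (ih h.2.2 y hy) h.1

end StmtAux

open StmtAux in
/-- lower bound for the number of monomials Borel-specializing to
`x^A = x_{i_1}^{α_{i_1}} ⋯ x_{i_s}^{α_{i_s}}` (here `e t` is the 0-based index of the
1-based variable index `i_{t+1}`, so the gaps `i_{t+1} - i_t - 1` agree):
`|P(x^A)| ≥ ∑_{t=1}^{s} C(α_{i_1}+⋯+α_{i_t} + i_{t+1}-i_t-1, i_{t+1}-i_t-1) - s + 1`. -/
theorem stmt2 {n : ℕ} (s : ℕ) (e : Fin s → Fin n) (he : StrictMono e)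
    (α : Fin s → ℕ) (hα : ∀ t, 0 < α t) :
    (∑ t : Fin s, (partSum α t + gapLen s e t).choose (gapLen s e t)) - s + 1 ≤
      (borelPSet (∑ t : Fin s, Finsupp.single (e t) (α t))).ncard := by
  classical
  set e' : Fin s → ℕ := fun t => (e t : ℕ) with he'
  set bl := buildL s e' α with hbl
  have hstrict : StrictMono e' := fun a b h => he h
  have hlt : ∀ t, e' t < n := fun t => (e t).2
  have hchain : ChainOK n bl := chainOK_buildL s e' α n hstrict hlt hα
  have hcount : BoundList n bl ≤ (famF n bl).card := card_famF_ge bl n hchain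
  have hterms := sum_terms_le s e' α n hstrict hlt hα
  have hgap : ∀ t, gapLen s e t = gp s e' n t := fun t => rfl
  set A := ∑ t : Fin s, Finsupp.single (e t) (α t) with hA
  have hAblocks : A = cnt n (blocksMS bl) := by
    rw [hbl, blocksMS_buildL, cnt_finsetSum]
    apply Finset.sum_congr rfl
    intro t _
    rw [cnt_replicate (α t) (e' t) (hlt t)]
  -- membership
  have hmemb : ∀ M ∈ famF n bl, cnt n M ∈ borelPSet A := by
    intro M hM
    obtain ⟨F, hFle, hFmap⟩ := famF_spec bl n hchain M hM
    have hMlt : ∀ x ∈ M, x < n := mem_famF_lt bl n M hM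
    refine ⟨fun i => if h : (i : ℕ) ∈ M then
        ⟨F i, lt_of_le_of_lt (hFle _ h) i.2⟩ else i, ?_, ?_⟩
    · intro i
      by_cases h : (i : ℕ) ∈ M
      · simp only [dif_pos h]
        exact hFle _ h
      · simp only [dif_neg h]
        exact le_rfl
    · rw [cnt_mapDomain _ F M hMlt (fun x hx => lt_of_le_of_lt (hFle x hx) (hMlt x hx))
        (fun x hx h => by simp only [dif_pos (show ((⟨x, h⟩ : Fin n) : ℕ) ∈ M from hx)]),
        hFmap, ← hAblocks]
  -- injectivity
  have hinj : Set.InjOn (cnt n) (famF n bl) := by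
    intro M hM N hN h
    exact cnt_injOn M N (mem_famF_lt bl n M hM) (mem_famF_lt bl n N hN) h
  -- finiteness of borelPSet A
  have hfin : (borelPSet A).Finite := by
    set D : Fin n →₀ ℕ := Finsupp.equivFunOnFinite.symm (fun _ => monDeg A) with hD
    apply Set.Finite.subset (Finset.finite_toSet (Finset.Icc 0 D))
    intro C hC
    obtain ⟨f, hf, hmap⟩ := hC
    simp only [Finset.coe_Icc, Set.mem_Icc]
    have hdeg : monDeg A = monDeg C := by
      rw [hmap]
      unfold monDeg
      exact Finsupp.sum_mapDomain_index (fun _ => rfl) (fun _ _ _ => rfl)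
    constructor
    · intro i
      exact Nat.zero_le _
    · intro i
      show C i ≤ monDeg A
      rw [hdeg]
      by_cases hi : i ∈ C.support
      · exact Finset.single_le_sum (f := fun a => C a) (fun _ _ => Nat.zero_le _) hi
      · rw [Finsupp.notMem_support_iff.mp hi]
        exact Nat.zero_le _
  -- final chain
  have hsub : ↑((famF n bl).image (cnt n)) ⊆ borelPSet A := by
    intro C hC
    simp only [Finset.coe_image, Set.mem_image, Finset.mem_coe] at hC
    obtain ⟨M, hM, rfl⟩ := hC
    exact hmemb M hM
  calc (∑ t : Fin s, (partSum α t + gapLen s e t).choose (gapLen s e t)) - s + 1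
      ≤ BoundList n bl := by
        rw [← hbl] at hterms
        have hsum : (∑ t : Fin s, (partSum α t + gapLen s e t).choose (gapLen s e t))
            = ∑ t : Fin s, (partSum α t + gp s e' n t).choose (gp s e' n t) :=
          Finset.sum_congr rfl (fun t _ => by rw [hgap t])
        rw [hsum]
        have hpos := BoundList_pos bl n
        omega
    _ ≤ (famF n bl).card := hcount
    _ = ((famF n bl).image (cnt n)).card := (Finset.card_image_of_injOn hinj).symm
    _ = (((famF n bl).image (cnt n) : Finset _) : Set _).ncard :=
        (Set.ncard_coe_finset _).symm
    _ ≤ (borelPSet A).ncard := Set.ncard_le_ncard hsub hfin
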